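/- If the cost matrix C (with h_p = h_q = h) satisfies C ≥ 0 and C_{i,j} = 0 ⇒ i = j, then ICT(p,q) = 0 implies p = q, and likewise ACT_k(p,q) = 0 implies p = q for any k ≥ 1. -/

import Mathlib

/-- If the cost matrix is effective, then `ICT(p,q) = 0` implies `p = q`, and likewise
`ACT_k(p,q) = 0` implies `p = q` for every `k ≥ 1`. -/
theorem stmt_12 (h : ℕ) (p q : Fin (h + 1) → ℝ)
    (hpnn : ∀ i, 0 ≤ p i) (hqnn : ∀ j, 0 ≤ q j)
    (hpsum : ∑ i, p i = 1) (hqsum : ∑ j, q j = 1)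
    (C : Fin (h + 1) → Fin (h + 1) → ℝ) (hC : ∀ i j, 0 ≤ C i j)
    (heff : ∀ i j, C i j = 0 → i = j) :
    (IsLeast
      {c : ℝ | ∃ F : Fin (h + 1) → Fin (h + 1) → ℝ,
        (∀ i j, 0 ≤ F i j) ∧ (∀ i, ∑ j, F i j = p i) ∧ (∀ i j, F i j ≤ q j) ∧
        c = ∑ i, ∑ j, F i j * C i j} 0 → p = q) ∧
    (∀ k : ℕ, 1 ≤ k →
      ∀ s : Fin (h + 1) → Equiv.Perm (Fin (h + 1)),
        (∀ i, ∀ l l' : Fin (h + 1), l ≤ l' → C i (s i l) ≤ C i (s i l')) →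
        IsLeast
          {c : ℝ | ∃ F : Fin (h + 1) → Fin (h + 1) → ℝ,
            (∀ i j, 0 ≤ F i j) ∧ (∀ i, ∑ j, F i j = p i) ∧
            (∀ i, ∀ l : Fin (h + 1), (l : ℕ) < k → F i (s i l) ≤ q (s i l)) ∧
            c = ∑ i, ∑ j, F i j * C i j} 0 → p = q) := by
  -- From a plan F with cost 0, every term vanishes; hence F is diagonal with F i i = p i.
  have key : ∀ F : Fin (h + 1) → Fin (h + 1) → ℝ,
      (∀ i j, 0 ≤ F i j) → (∀ i, ∑ j, F i j = p i) →
      (0 : ℝ) = ∑ i, ∑ j, F i j * C i j →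
      (∀ i j, F i j * C i j = 0) ∧ (∀ i, F i i = p i) := by
    intro F hFnn hrow hzero
    have hterm : ∀ i j, F i j * C i j = 0 := by
      have h1 := (Finset.sum_eq_zero_iff_of_nonneg (fun i _ =>
        Finset.sum_nonneg (fun j _ => mul_nonneg (hFnn i j) (hC i j)))).mp hzero.symm
      intro i j
      have h2 := (Finset.sum_eq_zero_iff_of_nonneg (fun j _ =>
        mul_nonneg (hFnn i j) (hC i j))).mp (h1 i (Finset.mem_univ i))
      exact h2 j (Finset.mem_univ j)
    refine ⟨hterm, fun i => ?_⟩
    have hoff : ∀ j, j ≠ i → F i j = 0 := by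
      intro j hj
      rcases mul_eq_zero.mp (hterm i j) with hF | hCz
      · exact hF
      · exact absurd (heff i j hCz) (fun e => hj e.symm)
    calc F i i = ∑ j, F i j := by
          rw [Finset.sum_eq_single i (fun j _ hj => hoff j hj) (by simp)]
      _ = p i := hrow i
  have final : (∀ i, p i ≤ q i) → p = q := by
    intro hle
    funext i
    by_contra hne
    have hlt : p i < q i := lt_of_le_of_ne (hle i) hne
    have : ∑ i, p i < ∑ i, q i :=
      Finset.sum_lt_sum (fun j _ => hle j) ⟨i, Finset.mem_univ i, hlt⟩
    rw [hpsum, hqsum] at this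
    exact lt_irrefl 1 this
  constructor
  · rintro ⟨⟨F, hFnn, hrow, hcap, hc⟩, -⟩
    obtain ⟨-, hdiag⟩ := key F hFnn hrow hc
    exact final fun i => (hdiag i).symm.le.trans (hcap i i)
  · rintro k hk s hs ⟨⟨F, hFnn, hrow, hcap, hc⟩, -⟩
    obtain ⟨hterm, hdiag⟩ := key F hFnn hrow hc
    refine final fun i => ?_
    rcases eq_or_lt_of_le (hpnn i) with hz | hpos
    · exact hz.symm.le.trans (hqnn i)
    · -- p i > 0, so F i i > 0, hence C i i = 0 and s i 0 = i.
      have hFii : 0 < F i i := by rw [hdiag i]; exact hpos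
      have hCii : C i i = 0 := by
        rcases mul_eq_zero.mp (hterm i i) with hF | hCz
        · exact absurd hF hFii.ne'
        · exact hCz
      set l₀ : Fin (h + 1) := (s i).symm i with hl₀
      have hsl₀ : s i l₀ = i := Equiv.apply_symm_apply _ _
      have h0 : C i (s i 0) ≤ 0 := by
        have := hs i 0 l₀ (Fin.zero_le l₀)
        rwa [hsl₀, hCii] at this
      have hs0 : s i (0 : Fin (h + 1)) = i :=
        (heff i _ (le_antisymm h0 (hC i _))).symm
      have hcap0 := hcap i (0 : Fin (h + 1)) (lt_of_lt_of_le (by simp) hk)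
      rw [hs0] at hcap0
      exact (hdiag i).symm.le.trans hcap0
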